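/- Let M be a deterministic labelled MDP with n_q states and semantics M, and let C^obs be the set of observable test sequences of length at most n_q² + 1. For any deterministic labelled MDP M' with at most n_q states and semantics M', M and M' are output-distribution equivalent if and only if M(c) = M'(c) for all c in C^obs. -/

import Mathlib

open scoped ENNReal Classical
open MeasureTheory

/-- Traces: alternating output-input sequences starting and ending with an output. -/
abbrev Trace (I O : Type*) := O × List (I × O)
/-- Test sequences: alternating output-input sequences starting with an output, ending with an input. -/
abbrev TS (I O : Type*) := List (O × I)
/-- Continuation sequences: start and end with an input. -/
abbrev CS (I O : Type*) := I × List (O × I)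

/-- Deterministic labelled Markov decision process. -/
structure DetMDP (Q I O : Type*) where
  q0 : Q
  trans : Q → I → Q → ℝ≥0∞
  lab : Q → O
  sum_one : ∀ q i, ∑' q', trans q i q' = 1
  det : ∀ q i q' q'', 0 < trans q i q' → 0 < trans q i q'' → lab q' = lab q'' → q' = q''

namespace DetMDP

variable {Q I O : Type*}

/-- Δ: unique successor with positive probability and matching label, if any. -/
noncomputable def step (M : DetMDP Q I O) (q : Q) (i : I) (o : O) : Option Q :=
  if h : ∃ q', 0 < M.trans q i q' ∧ M.lab q' = o then some h.choose else none

noncomputable def run (M : DetMDP Q I O) : Option Q → List (I × O) → Option Q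
  | oq, [] => oq
  | some q, (i, o) :: rest => M.run (M.step q i o) rest
  | none, _ :: _ => none

/-- δ*: the state reached by a trace, `none` if the trace is not observable. -/
noncomputable def dstar (M : DetMDP Q I O) (t : Trace I O) : Option Q :=
  if M.lab M.q0 = t.1 then M.run (some M.q0) t.2 else none

/-- Distribution over outputs after executing input `i` in state `q`. -/
noncomputable def outDist (M : DetMDP Q I O) (q : Q) (i : I) : O → ℝ≥0∞ :=
  fun o => ∑' q', if M.lab q' = o then M.trans q i q' else 0

end DetMDP

/-- Split a nonempty test sequence into its trace part and final input. -/
def tsSplit {I O : Type*} : O → I → TS I O → Trace I O × I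
  | o, i, [] => ((o, []), i)
  | o, i, (o', i') :: rest =>
    let p := tsSplit o' i' rest
    ((o, (i, p.1.1) :: p.1.2), p.2)

namespace DetMDP

variable {Q I O : Type*}

/-- The semantics of a deterministic labelled MDP: a partial map from test
sequences to output distributions. -/
noncomputable def sem (M : DetMDP Q I O) : TS I O → Option (O → ℝ≥0∞)
  | [] => some (fun o => if M.lab M.q0 = o then 1 else 0)
  | (o, i) :: rest =>
    let p := tsSplit o i rest
    match M.dstar p.1 with
    | none => none
    | some q => some (M.outDist q p.2)

/-- Probability of observing the output part of a trace suffix from a state. -/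
noncomputable def traceProb (M : DetMDP Q I O) : Option Q → List (I × O) → ℝ≥0∞
  | none, _ => 0
  | some _, [] => 1
  | some q, (i, o) :: rest => M.outDist q i o * M.traceProb (M.step q i o) rest

end DetMDP

def traceInputAux {I O : Type*} : O → List (I × O) → I → TS I O
  | o, [], i => [(o, i)]
  | o, (i', o') :: rest, i => (o, i') :: traceInputAux o' rest i

/-- The test sequence `t · i`. -/
def traceInput {I O : Type*} (t : Trace I O) (i : I) : TS I O := traceInputAux t.1 t.2 i

/-- The test sequence `t · e` for a continuation sequence `e`. -/
def traceCS {I O : Type*} (t : Trace I O) (e : CS I O) : TS I O := traceInput t e.1 ++ e.2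

/-- The trace `t · i · o`. -/
def extT {I O : Type*} (t : Trace I O) (i : I) (o : O) : Trace I O := (t.1, t.2 ++ [(i, o)])

/-- The last output of a trace. -/
def lastOut {I O : Type*} (t : Trace I O) : O := ((t.2.getLast?).map Prod.snd).getD t.1

/-- Trace prefix relation. -/
def tracePrefix {I O : Type*} (t t' : Trace I O) : Prop := t.1 = t'.1 ∧ t.2 <+: t'.2

/-- `f(s)(o)` read off a partial semantics function (0 when undefined). -/
def probOf {I O : Type*} (f : TS I O → Option (O → ℝ≥0∞)) (s : TS I O) (o : O) : ℝ≥0∞ :=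
  ((f s).getD fun _ => 0) o

/-- M-equivalence of traces. -/
def MEq {I O : Type*} (f : TS I O → Option (O → ℝ≥0∞)) (t1 t2 : Trace I O) : Prop :=
  lastOut t1 = lastOut t2 ∧ ∀ e : CS I O, f (traceCS t1 e) = f (traceCS t2 e)

/-- Row of a trace in an observation table with column labels `E`. -/
noncomputable def rowOn {I O : Type*} (E : Set (CS I O)) (f : TS I O → Option (O → ℝ≥0∞)) (t : Trace I O) :
    CS I O → Option (O → ℝ≥0∞) :=
  fun e => if e ∈ E then f (traceCS t e) else none

/-- Row equivalence `eqRow_E`. -/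
def eqRow {I O : Type*} (E : Set (CS I O)) (f : TS I O → Option (O → ℝ≥0∞))
    (t1 t2 : Trace I O) : Prop :=
  lastOut t1 = lastOut t2 ∧ rowOn E f t1 = rowOn E f t2

/-- Membership in `Lt(S)`: observable one-step extensions of short traces. -/
def inLt {I O : Type*} (f : TS I O → Option (O → ℝ≥0∞)) (S : Set (Trace I O))
    (t : Trace I O) : Prop :=
  ∃ s ∈ S, ∃ i o, t = extT s i o ∧ 0 < probOf f (traceInput s i) o

/-- Closedness of an observation table. -/
def ClosedTable {I O : Type*} (E : Set (CS I O)) (f : TS I O → Option (O → ℝ≥0∞))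
    (S : Set (Trace I O)) : Prop :=
  ∀ l, inLt f S l → ∃ s ∈ S, eqRow E f l s

/-- Consistency of an observation table. -/
def ConsistentTable {I O : Type*} (E : Set (CS I O)) (f : TS I O → Option (O → ℝ≥0∞))
    (S : Set (Trace I O)) : Prop :=
  ∀ s1 ∈ S, ∀ s2 ∈ S, eqRow E f s1 s2 → ∀ i o,
    (probOf f (traceInput s1 i) o = 0 ∧ probOf f (traceInput s2 i) o = 0) ∨
      eqRow E f (extT s1 i o) (extT s2 i o)

/-- The hypothesis state `⟨last(s), row(s)⟩` associated with a trace. -/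
noncomputable def stateOf {I O : Type*} (E : Set (CS I O)) (f : TS I O → Option (O → ℝ≥0∞))
    (t : Trace I O) : O × (CS I O → Option (O → ℝ≥0∞)) :=
  (lastOut t, rowOn E f t)

section Aux

variable {Q Q' I O : Type*}

namespace DetMDP

lemma run_none (M : DetMDP Q I O) : ∀ l : List (I × O), M.run none l = none
  | [] => rfl
  | (_, _) :: _ => rfl

lemma run_cons (M : DetMDP Q I O) (q : Q) (i : I) (o : O) (rest : List (I × O)) :
    M.run (some q) ((i, o) :: rest) = M.run (M.step q i o) rest := rfl

lemma run_append (M : DetMDP Q I O) : ∀ (l1 l2 : List (I × O)) (s : Option Q),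
    M.run s (l1 ++ l2) = M.run (M.run s l1) l2
  | [], l2, s => by cases s <;> rfl
  | (i, o) :: rest, l2, some q => by
      rw [List.cons_append, run_cons, run_cons]
      cases hs : M.step q i o with
      | none => rw [run_none, run_none, run_none]
      | some q1 => exact run_append M rest l2 (some q1)
  | (i, o) :: rest, l2, none => by rw [run_none, run_none, run_none]

lemma step_eq_none_iff (M : DetMDP Q I O) (q : Q) (i : I) (o : O) :
    M.step q i o = none ↔ M.outDist q i o = 0 := by
  rw [outDist, ENNReal.tsum_eq_zero, step]
  split
  · rename_i hex
    simp only [reduceCtorEq, false_iff]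
    intro hall
    obtain ⟨q', hpos, hlab⟩ := hex
    have := hall q'
    rw [if_pos hlab] at this
    exact absurd this (ne_of_gt hpos)
  · rename_i hex
    simp only [true_iff]
    intro q'
    split
    · rename_i hl
      by_contra hne
      exact hex ⟨q', pos_iff_ne_zero.mpr hne, hl⟩
    · rfl

lemma run_take_ne_none (M : DetMDP Q I O) {q0 : Q} {l : List (I × O)} {q : Q}
    (h : M.run (some q0) l = some q) (j : ℕ) :
    M.run (some q0) (l.take j) ≠ none := by
  intro hn
  rw [← List.take_append_drop j l, run_append, hn, run_none] at h
  exact Option.some_ne_none _ h.symm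

lemma exists_fail (M : DetMDP Q I O) : ∀ (l : List (I × O)) (q : Q),
    M.run (some q) l = none →
    ∃ j, j < l.length ∧ M.run (some q) (l.take j) ≠ none ∧
      M.run (some q) (l.take (j + 1)) = none
  | [], q, h => absurd h (by simp [run])
  | (i, o) :: rest, q, h => by
      cases hs : M.step q i o with
      | none =>
        refine ⟨0, by simp, ?_, ?_⟩
        · simp [run]
        · simpa [run_cons, hs] using M.run_none []
      | some q1 =>
        have h' : M.run (some q1) rest = none := by rwa [run_cons, hs] at h
        obtain ⟨j, hj, h1, h2⟩ := exists_fail M rest q1 h'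
        refine ⟨j + 1, by simpa using Nat.succ_lt_succ hj, ?_, ?_⟩
        · simpa [run_cons, hs] using h1
        · simpa [run_cons, hs] using h2

end DetMDP

lemma tsSplit_traceInputAux : ∀ (l : List (I × O)) (o : O) (i : I),
    ∃ i0 rest, traceInputAux o l i = (o, i0) :: rest ∧ tsSplit o i0 rest = ((o, l), i)
  | [], o, i => ⟨i, [], rfl, rfl⟩
  | (i', o') :: rest, o, i => by
      obtain ⟨i0, rest0, h1, h2⟩ := tsSplit_traceInputAux rest o' i
      refine ⟨i', (o', i0) :: rest0, ?_, ?_⟩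
      · simp [traceInputAux, h1]
      · simp [tsSplit, h2]

lemma length_traceInputAux : ∀ (l : List (I × O)) (o : O) (i : I),
    (traceInputAux o l i).length = l.length + 1
  | [], _, _ => rfl
  | (i', o') :: rest, o, i => by
      simp [traceInputAux, length_traceInputAux rest o' i]

lemma length_traceInput (t : Trace I O) (i : I) :
    (traceInput t i).length = t.2.length + 1 := length_traceInputAux t.2 t.1 i

lemma sem_traceInput (M : DetMDP Q I O) (t : Trace I O) (i : I) :
    M.sem (traceInput t i) = (M.dstar t).map (fun q => M.outDist q i) := by
  obtain ⟨o, l⟩ := t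
  obtain ⟨i0, rest, h1, h2⟩ := tsSplit_traceInputAux l o i
  show M.sem (traceInputAux o l i) = _
  rw [h1]
  simp only [DetMDP.sem, h2]
  cases M.dstar (o, l) <;> simp

end Aux

/-- Let `M` be a deterministic labelled MDP with `n_q` states and
`M'` one with at most `n_q` states.  Then `M` and `M'` are output-distribution
equivalent iff they agree on all observable test sequences of length at most
`n_q² + 1`. -/
theorem equivalence_iff_bounded_observable_tests {Q Q' I O : Type*}
    [Fintype Q] [Fintype Q'] (M : DetMDP Q I O) (M' : DetMDP Q' I O)
    (hcard : Fintype.card Q' ≤ Fintype.card Q) :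
    (∀ s : TS I O, M.sem s = M'.sem s) ↔
      (∀ c : TS I O, c.length ≤ Fintype.card Q ^ 2 + 1 → M.sem c ≠ none →
        M.sem c = M'.sem c) := by
  constructor
  · intro h c _ _; exact h c
  · intro h
    have hnil : M.sem [] = M'.sem [] := h [] (by simp) (by simp [DetMDP.sem])
    have hfun : (fun o => if M.lab M.q0 = o then (1 : ℝ≥0∞) else 0) =
        (fun o => if M'.lab M'.q0 = o then (1 : ℝ≥0∞) else 0) := by
      simpa [DetMDP.sem] using hnil
    have hlab : M'.lab M'.q0 = M.lab M.q0 := by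
      have := congrFun hfun (M.lab M.q0)
      rw [if_pos rfl] at this
      by_contra hne
      rw [if_neg hne] at this
      exact one_ne_zero this
    have key : ∀ n, ∀ t : Trace I O, t.2.length = n →
        ((M.dstar t = none ↔ M'.dstar t = none) ∧
         ∀ q q' i, M.dstar t = some q → M'.dstar t = some q' →
           M.outDist q i = M'.outDist q' i) := by
      intro n
      induction n using Nat.strong_induction_on with
      | _ n IH =>
        intro t htlen
        have partB : ∀ q q' i, M.dstar t = some q → M'.dstar t = some q' →
            M.outDist q i = M'.outDist q' i := by
          intro q q' i hq hq'
          by_cases hlen : t.2.length ≤ Fintype.card Q ^ 2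
          · have hc := h (traceInput t i) (by rw [length_traceInput]; omega)
              (by rw [sem_traceInput, hq]; simp)
            rw [sem_traceInput, sem_traceInput, hq, hq'] at hc
            simpa using hc
          · obtain ⟨o, l⟩ := t
            have h0 : M.lab M.q0 = o := by
              by_contra hx
              rw [DetMDP.dstar, if_neg hx] at hq
              exact Option.some_ne_none _ hq.symm
            have hrun : M.run (some M.q0) l = some q := by
              rwa [DetMDP.dstar, if_pos h0] at hq
            have h0' : M'.lab M'.q0 = o := by
              by_contra hx
              rw [DetMDP.dstar, if_neg hx] at hq'
              exact Option.some_ne_none _ hq'.symm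
            have hrun' : M'.run (some M'.q0) l = some q' := by
              rwa [DetMDP.dstar, if_pos h0'] at hq'
            simp only at hlen htlen
            have hd : ∀ j : ℕ, ∃ p : Q × Q',
                M.run (some M.q0) (l.take j) = some p.1 ∧
                M'.run (some M'.q0) (l.take j) = some p.2 := by
              intro j
              have h1 := M.run_take_ne_none hrun j
              have h2 := M'.run_take_ne_none hrun' j
              cases e1 : M.run (some M.q0) (l.take j) with
              | none => exact absurd e1 h1
              | some a =>
                cases e2 : M'.run (some M'.q0) (l.take j) with
                | none => exact absurd e2 h2
                | some b => exact ⟨(a, b), rfl, rfl⟩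
            choose f hf1 hf2 using hd
            have hcardlt : Fintype.card (Q × Q') < Fintype.card (Fin (l.length + 1)) := by
              rw [Fintype.card_prod, Fintype.card_fin]
              have h1 : Fintype.card Q * Fintype.card Q' ≤ Fintype.card Q ^ 2 := by
                rw [sq]; exact Nat.mul_le_mul_left _ hcard
              omega
            obtain ⟨a, b, hab, hfab⟩ :=
              Fintype.exists_ne_map_eq_of_card_lt
                (fun j : Fin (l.length + 1) => f j.val) hcardlt
            have hjk : ∃ j k : ℕ, j < k ∧ k ≤ l.length ∧ f j = f k := by
              rcases lt_or_gt_of_ne (fun hv => hab (Fin.ext hv) : a.val ≠ b.val) with hlt | hlt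
              · exact ⟨a.val, b.val, hlt, Nat.lt_succ_iff.mp b.isLt, hfab⟩
              · exact ⟨b.val, a.val, hlt, Nat.lt_succ_iff.mp a.isLt, hfab.symm⟩
            obtain ⟨j, k, hjklt, hkl, hfe⟩ := hjk
            set l' := l.take j ++ l.drop k with hl'
            have hrunl' : M.run (some M.q0) l' = some q := by
              rw [hl', M.run_append, hf1 j, hfe, ← hf1 k, ← M.run_append,
                List.take_append_drop]
              exact hrun
            have hrunl'' : M'.run (some M'.q0) l' = some q' := by
              rw [hl', M'.run_append, hf2 j, hfe, ← hf2 k, ← M'.run_append,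
                List.take_append_drop]
              exact hrun'
            have hlen' : l'.length < n := by
              rw [hl', List.length_append, List.length_take, List.length_drop]
              omega
            obtain ⟨_, hB⟩ := IH l'.length hlen' (o, l') rfl
            refine hB q q' i ?_ ?_
            · rw [DetMDP.dstar, if_pos h0]; exact hrunl'
            · rw [DetMDP.dstar, if_pos h0']; exact hrunl''
        refine ⟨⟨?_, ?_⟩, partB⟩
        · -- M none → M' none
          intro hn
          obtain ⟨o, l⟩ := t
          by_cases h0 : M.lab M.q0 = o
          · have hrun : M.run (some M.q0) l = none := by
              rwa [DetMDP.dstar, if_pos h0] at hn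
            obtain ⟨j, hj, h1, h2⟩ := M.exists_fail l M.q0 hrun
            obtain ⟨qj, hqj⟩ := Option.ne_none_iff_exists'.mp h1
            have hsplit : l.take j ++ [l[j]] = l.take (j + 1) :=
              List.take_concat_get' l j hj
            have hstep : M.step qj l[j].1 l[j].2 = none := by
              rw [← hsplit, M.run_append, hqj] at h2
              rwa [show M.run (some qj) [l[j]] = M.run (M.step qj l[j].1 l[j].2) [] from rfl,
                show ∀ s : Option Q, M.run s [] = s from fun s => by cases s <;> rfl] at h2
            have hout : M.outDist qj l[j].1 l[j].2 = 0 :=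
              (M.step_eq_none_iff _ _ _).mp hstep
            rw [DetMDP.dstar, if_pos (hlab.trans h0)]
            cases e2 : M'.run (some M'.q0) (l.take j) with
            | none =>
              rw [← List.take_append_drop j l, M'.run_append, e2, M'.run_none]
            | some q'j =>
              simp only at htlen
              obtain ⟨_, hB⟩ := IH j (by omega) (o, l.take j)
                (by simp; omega)
              have hOD : M.outDist qj l[j].1 = M'.outDist q'j l[j].1 := by
                refine hB qj q'j l[j].1 ?_ ?_
                · rw [DetMDP.dstar, if_pos h0]; exact hqj
                · rw [DetMDP.dstar, if_pos (hlab.trans h0)]; exact e2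
              have hstep' : M'.step q'j l[j].1 l[j].2 = none := by
                rw [M'.step_eq_none_iff, ← hOD]; exact hout
              have h2' : M'.run (some M'.q0) (l.take (j + 1)) = none := by
                rw [← hsplit, M'.run_append, e2,
                  show M'.run (some q'j) [l[j]] = M'.run (M'.step q'j l[j].1 l[j].2) [] from rfl,
                  hstep']
                rfl
              rw [← List.take_append_drop (j + 1) l, M'.run_append, h2', M'.run_none]
          · rw [DetMDP.dstar, if_neg (fun hx => h0 (hlab.symm.trans hx))]
        · -- M' none → M none
          intro hn
          obtain ⟨o, l⟩ := t
          by_cases h0 : M'.lab M'.q0 = o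
          · have hrun : M'.run (some M'.q0) l = none := by
              rwa [DetMDP.dstar, if_pos h0] at hn
            obtain ⟨j, hj, h1, h2⟩ := M'.exists_fail l M'.q0 hrun
            obtain ⟨qj, hqj⟩ := Option.ne_none_iff_exists'.mp h1
            have hsplit : l.take j ++ [l[j]] = l.take (j + 1) :=
              List.take_concat_get' l j hj
            have hstep : M'.step qj l[j].1 l[j].2 = none := by
              rw [← hsplit, M'.run_append, hqj] at h2
              rwa [show M'.run (some qj) [l[j]] = M'.run (M'.step qj l[j].1 l[j].2) [] from rfl,
                show ∀ s : Option Q', M'.run s [] = s from fun s => by cases s <;> rfl] at h2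
            have hout : M'.outDist qj l[j].1 l[j].2 = 0 :=
              (M'.step_eq_none_iff _ _ _).mp hstep
            rw [DetMDP.dstar, if_pos (hlab.symm.trans h0)]
            cases e2 : M.run (some M.q0) (l.take j) with
            | none =>
              rw [← List.take_append_drop j l, M.run_append, e2, M.run_none]
            | some q'j =>
              simp only at htlen
              obtain ⟨_, hB⟩ := IH j (by omega) (o, l.take j)
                (by simp; omega)
              have hOD : M.outDist q'j l[j].1 = M'.outDist qj l[j].1 := by
                refine hB q'j qj l[j].1 ?_ ?_
                · rw [DetMDP.dstar, if_pos (hlab.symm.trans h0)]; exact e2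
                · rw [DetMDP.dstar, if_pos h0]; exact hqj
              have hstep' : M.step q'j l[j].1 l[j].2 = none := by
                rw [M.step_eq_none_iff, hOD]; exact hout
              have h2' : M.run (some M.q0) (l.take (j + 1)) = none := by
                rw [← hsplit, M.run_append, e2,
                  show M.run (some q'j) [l[j]] = M.run (M.step q'j l[j].1 l[j].2) [] from rfl,
                  hstep']
                rfl
              rw [← List.take_append_drop (j + 1) l, M.run_append, h2', M.run_none]
          · rw [DetMDP.dstar, if_neg (fun hx => h0 (hlab.trans hx))]
    intro s
    match s with
    | [] => exact hnil
    | (o, i) :: rest =>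
      obtain ⟨A, B⟩ := key (tsSplit o i rest).1.2.length (tsSplit o i rest).1 rfl
      simp only [DetMDP.sem]
      cases hq : M.dstar (tsSplit o i rest).1 with
      | none => rw [A.mp hq]
      | some q =>
        cases hq' : M'.dstar (tsSplit o i rest).1 with
        | none => exact absurd (A.mpr hq') (by simp [hq])
        | some q' => simp [B q q' (tsSplit o i rest).2 hq hq']
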